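/- Let (X,d) be a geodesic metric space that is δ-hyperbolic for some δ ≥ 0, in the sense that for all w,x,y,z ∈ X the Gromov products satisfy (x|z)_w ≥ min((x|y)_w, (y|z)_w) − δ. Then for every finite subset S ⊆ X with |S| = k there exist a metric space (T, d_T) that is 0-hyperbolic (it satisfies the same four-point condition with δ = 0) and a map Φ : S → T such that for all x, y ∈ S: d(x,y) − 2kδ ≤ d_T(Φ(x), Φ(y)) ≤ d(x,y). -/
import Mathlib


noncomputable section

/-- The Gromov product `(x|y)_w = ½(d(x,w) + d(y,w) − d(x,y))` of `x` and `y`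
with respect to the base point `w`. -/
def gromovProd {X : Type*} [MetricSpace X] (w x y : X) : ℝ :=
  (dist x w + dist y w - dist x y) / 2

/-- A metric space is `δ`-hyperbolic if the four-point condition
`(x|z)_w ≥ min((x|y)_w, (y|z)_w) − δ` holds for all `w, x, y, z`. -/
def IsDeltaHyperbolic (X : Type*) [MetricSpace X] (δ : ℝ) : Prop :=
  ∀ w x y z : X, min (gromovProd w x y) (gromovProd w y z) - δ ≤ gromovProd w x z

/-- A geodesic metric space: every pair of points is joined by a geodesic
segment, i.e. an isometric image of the interval `[0, d(x,y)]`. -/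
def IsGeodesicSpace (X : Type*) [MetricSpace X] : Prop :=
  ∀ x y : X, ∃ f : ℝ → X, f 0 = x ∧ f (dist x y) = y ∧
    ∀ s ∈ Set.Icc (0 : ℝ) (dist x y), ∀ t ∈ Set.Icc (0 : ℝ) (dist x y),
      dist (f s) (f t) = |s - t|

/-- A wrapper around `Fin k` carrying no pre-existing topology/metric instances. -/
def TreeAux (k : ℕ) : Type := Fin k

instance (k : ℕ) : Fintype (TreeAux k) := inferInstanceAs (Fintype (Fin k))
instance (k : ℕ) : DecidableEq (TreeAux k) := inferInstanceAs (DecidableEq (Fin k))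

/-- The identity equivalence between `Fin k` and `TreeAux k`. -/
def treeAuxEquiv (k : ℕ) : Fin k ≃ TreeAux k := Equiv.refl (Fin k)

namespace GromovAux

variable {ι : Type} (p : ι → ι → ℝ)

/-- minimum of `p` over consecutive points of the chain `x :: l ++ [y]`. -/
def cMin : ι → List ι → ι → ℝ
  | x, [], y => p x y
  | x, z :: l, y => min (p x z) (cMin z l y)

@[simp] lemma cMin_nil (x y : ι) : cMin p x [] y = p x y := rfl
@[simp] lemma cMin_cons (x z y : ι) (l : List ι) :
    cMin p x (z :: l) y = min (p x z) (cMin p z l y) := rfl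

lemma cMin_append (u y : ι) (a : List ι) : ∀ (x : ι) (b : List ι),
    cMin p x (a ++ u :: b) y = min (cMin p x a u) (cMin p u b y) := by
  induction a with
  | nil => intro x b; simp
  | cons z t ih => intro x b; simp [ih, min_assoc]

lemma cMin_reverse (hsym : ∀ a b, p a b = p b a) (y : ι) :
    ∀ (l : List ι) (x : ι), cMin p x l y = cMin p y l.reverse x := by
  intro l
  induction l with
  | nil => intro x; simp [hsym x y]
  | cons z t ih =>
    intro x
    have h : cMin p y (t.reverse ++ z :: []) x
        = min (cMin p y t.reverse z) (cMin p z [] x) := cMin_append p z x t.reverse y []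
    simp only [List.reverse_cons]
    rw [h]
    simp [ih z, hsym x z, min_comm]

lemma cMin_le_bound_right {b : ι → ℝ} (hb : ∀ x y, p x y ≤ b y) (y : ι) :
    ∀ (l : List ι) (x : ι), cMin p x l y ≤ b y := by
  intro l
  induction l with
  | nil => intro x; exact hb x y
  | cons z t ih => intro x; exact le_trans (min_le_right _ _) (ih z)

lemma cMin_le_bound_left {b : ι → ℝ} (hb : ∀ x y, p x y ≤ b x) (y : ι) (l : List ι) (x : ι) :
    cMin p x l y ≤ b x := by
  cases l with
  | nil => exact hb x y
  | cons z t => exact le_trans (min_le_left _ _) (hb x z)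

lemma cMin_le_hyp {δ : ℝ} (hδ : 0 ≤ δ)
    (hp : ∀ x y z, min (p x y) (p y z) - δ ≤ p x z) (y : ι) :
    ∀ (l : List ι) (x : ι), cMin p x l y ≤ p x y + l.length * δ := by
  intro l
  induction l with
  | nil => intro x; simp
  | cons z t ih =>
    intro x
    have h1 := ih z
    have h2 := hp x z y
    have : cMin p x (z :: t) y ≤ min (p x z) (p z y + t.length * δ) :=
      min_le_min le_rfl h1
    have h3 : min (p x z) (p z y + t.length * δ) ≤ min (p x z) (p z y) + t.length * δ := by
      rcases le_total (p x z) (p z y) with h | h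
      · have ht : (0:ℝ) ≤ t.length * δ := by positivity
        rcases min_cases (p x z) (p z y + t.length * δ) with ⟨e, _⟩ | ⟨e, _⟩ <;>
          rw [e] <;> rw [min_eq_left h] <;> linarith
      · rcases min_cases (p x z) (p z y + t.length * δ) with ⟨e, _⟩ | ⟨e, _⟩ <;>
          rw [e] <;> rw [min_eq_right h] <;> linarith
    simp only [List.length_cons]
    push_cast
    rcases min_cases (p x z) (p z y) with ⟨e, _⟩ | ⟨e, _⟩ <;> rw [e] at h3 <;> linarith

lemma dup_decomp : ∀ {l : List ι}, ¬l.Nodup →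
    ∃ (a : ι) (l₁ l₂ l₃ : List ι), l = l₁ ++ a :: (l₂ ++ a :: l₃) := by
  intro l
  induction l with
  | nil => intro h; exact absurd List.nodup_nil h
  | cons b t ih =>
    intro h
    by_cases hb : b ∈ t
    · obtain ⟨s, r, rfl⟩ := List.append_of_mem hb
      exact ⟨b, [], s, r, rfl⟩
    · have ht : ¬t.Nodup := fun hn => h (List.nodup_cons.mpr ⟨hb, hn⟩)
      obtain ⟨a, l₁, l₂, l₃, rfl⟩ := ih ht
      exact ⟨a, b :: l₁, l₂, l₃, rfl⟩

lemma shorten : ∀ (n : ℕ) (l : List ι), l.length ≤ n → ∀ x y : ι,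
    ∃ l' : List ι, l'.Nodup ∧ cMin p x l y ≤ cMin p x l' y := by
  intro n
  induction n with
  | zero =>
    intro l hl x y
    have : l = [] := List.length_eq_zero_iff.mp (Nat.le_zero.mp hl)
    exact ⟨[], List.nodup_nil, by rw [this]⟩
  | succ n ih =>
    intro l hl x y
    by_cases h : l.Nodup
    · exact ⟨l, h, le_rfl⟩
    · obtain ⟨a, l₁, l₂, l₃, rfl⟩ := dup_decomp h
      have hle : cMin p x (l₁ ++ a :: (l₂ ++ a :: l₃)) y ≤ cMin p x (l₁ ++ a :: l₃) y := by
        rw [cMin_append, cMin_append, cMin_append]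
        exact min_le_min le_rfl (min_le_right _ _)
      have hlen : (l₁ ++ a :: l₃).length ≤ n := by
        simp only [List.length_append, List.length_cons] at hl ⊢
        omega
      obtain ⟨l', hn, hle'⟩ := ih (l₁ ++ a :: l₃) hlen x y
      exact ⟨l', hn, le_trans hle hle'⟩

variable [Fintype ι] [DecidableEq ι]

/-- `pstar p x y` : max over duplicate-free chains of the chain minimum. -/
def pstar (x y : ι) : ℝ :=
  (Finset.univ : Finset {l : List ι // l.Nodup}).sup'
    ⟨⟨[], List.nodup_nil⟩, Finset.mem_univ _⟩ fun l => cMin p x l.1 y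

lemma le_pstar (x y : ι) : p x y ≤ pstar p x y := by
  have := Finset.le_sup' (f := fun l : {l : List ι // l.Nodup} => cMin p x l.1 y)
    (b := ⟨[], List.nodup_nil⟩) (Finset.mem_univ _)
  simpa [pstar] using this

lemma cMin_le_pstar (x y : ι) (l : List ι) : cMin p x l y ≤ pstar p x y := by
  obtain ⟨l', hn, hle⟩ := shorten p l.length l le_rfl x y
  refine le_trans hle ?_
  have := Finset.le_sup' (f := fun l : {l : List ι // l.Nodup} => cMin p x l.1 y)
    (b := ⟨l', hn⟩) (Finset.mem_univ _)
  simpa [pstar] using this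

lemma pstar_le_hyp {δ : ℝ} (hδ : 0 ≤ δ)
    (hp : ∀ x y z, min (p x y) (p y z) - δ ≤ p x z) (x y : ι) :
    pstar p x y ≤ p x y + (Fintype.card ι) * δ := by
  apply Finset.sup'_le
  intro l _
  refine le_trans (cMin_le_hyp p hδ hp y l.1 x) ?_
  have : (l.1.length : ℝ) ≤ (Fintype.card ι : ℝ) := by
    exact_mod_cast l.2.length_le_card
  nlinarith
  
lemma pstar_le_bound_right {b : ι → ℝ} (hb : ∀ x y, p x y ≤ b y) (x y : ι) :
    pstar p x y ≤ b y :=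
  Finset.sup'_le _ _ fun l _ => cMin_le_bound_right p hb y l.1 x

lemma pstar_le_bound_left {b : ι → ℝ} (hb : ∀ x y, p x y ≤ b x) (x y : ι) :
    pstar p x y ≤ b x :=
  Finset.sup'_le _ _ fun l _ => cMin_le_bound_left p hb y l.1 x

lemma pstar_comm (hsym : ∀ a b, p a b = p b a) (x y : ι) :
    pstar p x y = pstar p y x := by
  have key : ∀ u v : ι, pstar p u v ≤ pstar p v u := by
    intro u v
    apply Finset.sup'_le
    intro l _
    rw [cMin_reverse p hsym v l.1 u]
    exact cMin_le_pstar p v u l.1.reverse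
  exact le_antisymm (key x y) (key y x)

lemma pstar_ultra (x y z : ι) : min (pstar p x y) (pstar p y z) ≤ pstar p x z := by
  obtain ⟨l₁, _, h₁⟩ := Finset.exists_mem_eq_sup'
    (⟨⟨[], List.nodup_nil⟩, Finset.mem_univ _⟩ :
      (Finset.univ : Finset {l : List ι // l.Nodup}).Nonempty)
    (fun l : {l : List ι // l.Nodup} => cMin p x l.1 y)
  obtain ⟨l₂, _, h₂⟩ := Finset.exists_mem_eq_sup'
    (⟨⟨[], List.nodup_nil⟩, Finset.mem_univ _⟩ :
      (Finset.univ : Finset {l : List ι // l.Nodup}).Nonempty)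
    (fun l : {l : List ι // l.Nodup} => cMin p y l.1 z)
  have : min (pstar p x y) (pstar p y z) = cMin p x (l₁.1 ++ y :: l₂.1) z := by
    rw [cMin_append]
    rw [pstar, pstar, h₁, h₂]
  rw [this]
  exact cMin_le_pstar p x z _

/-- four point condition for an "ultrametric-like" symmetric kernel. -/
lemma fourpoint {P : ι → ι → ℝ} (hsym : ∀ a b, P a b = P b a)
    (hu : ∀ a b c, min (P a b) (P b c) ≤ P a c) (x y z w : ι) :
    min (P x y + P z w) (P y z + P x w) ≤ P x z + P y w := by
  by_contra hcon
  push_neg at hcon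
  rw [lt_min_iff] at hcon
  obtain ⟨h1, h2⟩ := hcon
  have u1 : min (P x y) (P y z) ≤ P x z := hu x y z
  have u2 : min (P y z) (P z w) ≤ P y w := hu y z w
  have u3 : min (P x y) (P x w) ≤ P y w := by
    have := hu y x w
    rwa [hsym y x] at this
  have u4 : min (P x w) (P z w) ≤ P x z := by
    have := hu x w z
    rwa [hsym w z] at this
  rcases min_cases (P x y) (P y z) with ⟨e1, he1⟩ | ⟨e1, he1⟩ <;> rw [e1] at u1 <;>
    rcases min_cases (P y z) (P z w) with ⟨e2, he2⟩ | ⟨e2, he2⟩ <;> rw [e2] at u2 <;>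
    rcases min_cases (P x y) (P x w) with ⟨e3, he3⟩ | ⟨e3, he3⟩ <;> rw [e3] at u3 <;>
    rcases min_cases (P x w) (P z w) with ⟨e4, he4⟩ | ⟨e4, he4⟩ <;> rw [e4] at u4 <;>
    linarith

end GromovAux



lemma gromovProd_le_left {X : Type*} [MetricSpace X] (w x y : X) :
    gromovProd w x y ≤ dist x w := by
  have := dist_triangle y x w
  have := dist_comm x y
  unfold gromovProd
  linarith

lemma gromovProd_le_right {X : Type*} [MetricSpace X] (w x y : X) :
    gromovProd w x y ≤ dist y w := by
  have := dist_triangle x y w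
  unfold gromovProd
  linarith

lemma gromovProd_self {X : Type*} [MetricSpace X] (w x : X) :
    gromovProd w x x = dist x w := by
  unfold gromovProd
  rw [dist_self]
  ring

lemma gromovProd_comm {X : Type*} [MetricSpace X] (w x y : X) :
    gromovProd w x y = gromovProd w y x := by
  unfold gromovProd
  rw [dist_comm x y]
  ring



/-- **Gromov's tree approximation theorem.** If `(X, d)` is a geodesic metric
space that is `δ`-hyperbolic for some `δ ≥ 0`, then for every finite subset
`S ⊆ X` with `|S| = k` there exist a `0`-hyperbolic metric space `T` and a map
`Φ : S → T` such that `d(x,y) − 2kδ ≤ d_T(Φ(x), Φ(y)) ≤ d(x,y)` for all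
`x, y ∈ S`. -/

theorem gromov_tree_approximation {X : Type*} [MetricSpace X]
    (δ : ℝ) (hδ : 0 ≤ δ) (hgeo : IsGeodesicSpace X) (hhyp : IsDeltaHyperbolic X δ)
    (S : Finset X) (k : ℕ) (hk : S.card = k) :
    ∃ (T : Type) (_ : MetricSpace T) (Φ : S → T),
      IsDeltaHyperbolic T 0 ∧
      ∀ x y : S, dist (x : X) (y : X) - 2 * k * δ ≤ dist (Φ x) (Φ y) ∧
        dist (Φ x) (Φ y) ≤ dist (x : X) (y : X) := by
  classical
  rcases S.eq_empty_or_nonempty with rfl | ⟨x₀, hx₀⟩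
  · -- empty case
    haveI : IsEmpty ((∅ : Finset X) : Finset X) := by
      simp only [Finset.isEmpty_coe_sort]
    refine ⟨PUnit, ?_, fun x => isEmptyElim x, ?_, fun x => isEmptyElim x⟩
    · exact MetricSpace.induced (fun _ => (0:ℝ)) (fun a b _ => Subsingleton.elim a b)
        inferInstance
    · intro w x y z
      have : x = z := Subsingleton.elim x z
      subst this
      have hxy : x = y := Subsingleton.elim x y
      subst hxy
      simp [gromovProd]
  · -- main case
    set w : X := x₀ with hw
    let e : ↥S ≃ TreeAux k := ((Finset.equivFin S).trans (finCongr hk)).trans (treeAuxEquiv k)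
    let f : TreeAux k → X := fun i => ((e.symm i : ↥S) : X)
    let p : TreeAux k → TreeAux k → ℝ := fun i j => gromovProd w (f i) (f j)
    let b : TreeAux k → ℝ := fun i => dist (f i) w
    have hpsym : ∀ i j, p i j = p j i := fun i j => gromovProd_comm w (f i) (f j)
    have hphyp : ∀ i j l, min (p i j) (p j l) - δ ≤ p i l := fun i j l =>
      hhyp w (f i) (f j) (f l)
    have hpbr : ∀ i j, p i j ≤ b j := fun i j => gromovProd_le_right w (f i) (f j)
    have hpbl : ∀ i j, p i j ≤ b i := fun i j => gromovProd_le_left w (f i) (f j)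
    have hpself : ∀ i, p i i = b i := fun i => gromovProd_self w (f i)
    set P : TreeAux k → TreeAux k → ℝ := GromovAux.pstar p with hP
    have hPle : ∀ i j, p i j ≤ P i j := GromovAux.le_pstar p
    have hPub : ∀ i j, P i j ≤ p i j + k * δ := by
      intro i j
      have h := GromovAux.pstar_le_hyp p hδ hphyp i j
      have hcard : Fintype.card (TreeAux k) = k := Fintype.card_fin k
      rwa [hcard] at h
    have hPbr : ∀ i j, P i j ≤ b j := GromovAux.pstar_le_bound_right p hpbr
    have hPbl : ∀ i j, P i j ≤ b i := GromovAux.pstar_le_bound_left p hpbl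
    have hPself : ∀ i, P i i = b i := fun i =>
      le_antisymm (hPbr i i) (by rw [← hpself i]; exact hPle i i)
    have hPsym : ∀ i j, P i j = P j i := GromovAux.pstar_comm p hpsym
    have hPu : ∀ i j l, min (P i j) (P j l) ≤ P i l := GromovAux.pstar_ultra p
    -- the pseudometric
    let D : TreeAux k → TreeAux k → ℝ := fun i j => b i + b j - 2 * P i j
    letI pms : PseudoMetricSpace (TreeAux k) :=
      { dist := D
        dist_self := fun i => by simp only [D]; rw [hPself i]; ring
        dist_comm := fun i j => by simp only [D]; rw [hPsym i j]; ring
        dist_triangle := fun i j l => by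
          simp only [D]
          have h1 := hPu i j l
          have h2 := hPbr i j
          have h3 := hPbl j l
          rcases min_cases (P i j) (P j l) with ⟨e1, he1⟩ | ⟨e1, he1⟩ <;> rw [e1] at h1 <;>
            linarith }
    have hdist : ∀ i j : TreeAux k, dist i j = D i j := fun _ _ => rfl
    refine ⟨SeparationQuotient (TreeAux k), inferInstance,
      fun x => SeparationQuotient.mk (e x), ?_, ?_⟩
    · -- 0-hyperbolicity
      intro w' x' y' z'
      obtain ⟨a, rfl⟩ := SeparationQuotient.surjective_mk w'
      obtain ⟨i, rfl⟩ := SeparationQuotient.surjective_mk x'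
      obtain ⟨j, rfl⟩ := SeparationQuotient.surjective_mk y'
      obtain ⟨l, rfl⟩ := SeparationQuotient.surjective_mk z'
      have hgp : ∀ u v : TreeAux k,
          gromovProd (SeparationQuotient.mk a) (SeparationQuotient.mk u)
            (SeparationQuotient.mk v) = b a + P u v - P u a - P v a := by
        intro u v
        unfold gromovProd
        rw [SeparationQuotient.dist_mk, SeparationQuotient.dist_mk,
          SeparationQuotient.dist_mk, hdist, hdist, hdist]
        simp only [D]
        ring
      rw [hgp, hgp, hgp]
      have key := GromovAux.fourpoint hPsym hPu i j l a
      rcases min_cases (P i j + P l a) (P j l + P i a) with ⟨e1, he1⟩ | ⟨e1, he1⟩ <;>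
        rw [e1] at key <;>
      rcases min_cases (b a + P i j - P i a - P j a) (b a + P j l - P j a - P l a)
        with ⟨e2, he2⟩ | ⟨e2, he2⟩ <;> rw [e2] <;> linarith
    · -- distance bounds
      intro x y
      have hd : dist (SeparationQuotient.mk (e x)) (SeparationQuotient.mk (e y))
          = D (e x) (e y) := SeparationQuotient.dist_mk _ _
      have hfx : f (e x) = (x : X) := by simp [f]
      have hfy : f (e y) = (y : X) := by simp [f]
      have hgpd : p (e x) (e y) = gromovProd w (x : X) (y : X) := by
        simp only [p, hfx, hfy]
      have hexp : b (e x) + b (e y) - 2 * p (e x) (e y) = dist (x : X) (y : X) := by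
        simp only [b, hfx, hfy, hgpd]
        unfold gromovProd
        ring
      constructor
      · rw [hd]
        have := hPub (e x) (e y)
        simp only [D]
        linarith
      · rw [hd]
        have := hPle (e x) (e y)
        simp only [D]
        linarith
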